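/- Let A_0 ∈ Mat_{n×n}(ℝ) be skew-symmetric, n̲ a signature, and q̃ ∈ ℝ^n a point such that (A_0 q̃)_i = (A_0 q̃)_j for all i,j in the same group α, and λ_α := Σ_{j∈α} q̃_j ≠ 0 for every group α. Set D = diag(λ_1 I_{n_1},…,λ_p I_{n_p}). Then q = D^{−1} q̃ is a formal equilibrium of the polymatrix game (n̲, A_0 D); consequently (n̲, A_0 D) is a conservative polymatrix game with skew-symmetric model A_0 and scaling vector (λ_1,…,λ_p). -/
import Mathlib

open Matrix

/-- Index set of a polymatrix game with signature `n : Fin p → ℕ`: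
`i = ⟨α, k⟩` is the `k`-th strategy of group `α`. -/
abbrev Idx (p : ℕ) (n : Fin p → ℕ) : Type := (α : Fin p) × Fin (n α)

noncomputable section

/-- The polymatrix replicator vector field `X_{(n̲,A)}`; note that
`Σ_β (x^α)ᵗ A^{α,β} x^β = Σ_{k ∈ α} x_k (Ax)_k`. -/
def replicator {p : ℕ} {n : Fin p → ℕ} (A : Matrix (Idx p n) (Idx p n) ℝ)
    (x : Idx p n → ℝ) (i : Idx p n) : ℝ :=
  x i * (A.mulVec x i - ∑ k : Fin (n i.1), x ⟨i.1, k⟩ * A.mulVec x ⟨i.1, k⟩)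

/-- The polytope `Γ_n̲` (product of simplexes). -/
def Gamma (p : ℕ) (n : Fin p → ℕ) : Set (Idx p n → ℝ) :=
  {x | (∀ i, 0 ≤ x i) ∧ ∀ α : Fin p, ∑ k : Fin (n α), x ⟨α, k⟩ = 1}

/-- The relative interior `Γ°_n̲`. -/
def GammaInt (p : ℕ) (n : Fin p → ℕ) : Set (Idx p n → ℝ) :=
  {x | (∀ i, 0 < x i) ∧ ∀ α : Fin p, ∑ k : Fin (n α), x ⟨α, k⟩ = 1}

/-- The block diagonal matrix `T_x = diag(T^1_x,…,T^p_x)`, `T^α_x = x^α 𝟙ᵗ - I`. -/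
def Tmat {p : ℕ} {n : Fin p → ℕ} (x : Idx p n → ℝ) : Matrix (Idx p n) (Idx p n) ℝ :=
  fun i j => (if i.1 = j.1 then x i else 0) - (if i = j then 1 else 0)

/-- The bivector `π_A(x) = - T_x D_x A D_x T_xᵀ`. -/
def piA {p : ℕ} {n : Fin p → ℕ} (A : Matrix (Idx p n) (Idx p n) ℝ) (x : Idx p n → ℝ) :
    Matrix (Idx p n) (Idx p n) ℝ :=
  -(Tmat x * Matrix.diagonal x * A * Matrix.diagonal x * (Tmat x)ᵀ)

/-- A formal equilibrium of the polymatrix game `(n̲, A)`. -/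
def FormalEq {p : ℕ} {n : Fin p → ℕ} (A : Matrix (Idx p n) (Idx p n) ℝ)
    (q : Idx p n → ℝ) : Prop :=
  (∀ (α : Fin p) (i j : Fin (n α)), A.mulVec q ⟨α, i⟩ = A.mulVec q ⟨α, j⟩) ∧
  ∀ α : Fin p, ∑ j : Fin (n α), q ⟨α, j⟩ = 1

/-- Every block `M^{α,β}` of `M` (in the block decomposition induced by the signature)
has all of its rows equal. -/
def EqualRows {p : ℕ} {n : Fin p → ℕ} (M : Matrix (Idx p n) (Idx p n) ℝ) : Prop :=
  ∀ (α β : Fin p) (i i' : Fin (n α)) (j : Fin (n β)), M ⟨α, i⟩ ⟨β, j⟩ = M ⟨α, i'⟩ ⟨β, j⟩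

/-- A polymatrix game `(n̲,A)` is conservative iff it has a formal equilibrium and
`A ∼ A₀ D` for some skew-symmetric `A₀` and `D = diag(λ_1 I_{n_1},…,λ_p I_{n_p})`
with all `λ_β ≠ 0`. -/
def IsConservative {p : ℕ} {n : Fin p → ℕ} (A : Matrix (Idx p n) (Idx p n) ℝ) : Prop :=
  (∃ q : Idx p n → ℝ, FormalEq A q) ∧
  ∃ (A₀ : Matrix (Idx p n) (Idx p n) ℝ) (lam : Fin p → ℝ),
    A₀ᵀ = -A₀ ∧ (∀ β, lam β ≠ 0) ∧
      EqualRows (A - A₀ * Matrix.diagonal (fun i => lam i.1))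

/-- If `A₀` is skew-symmetric, `(A₀q̃)_i = (A₀q̃)_j` within each group, and
`λ_α = Σ_{j∈α} q̃_j ≠ 0`, then with `D = diag(λ_1 I_{n_1},…,λ_p I_{n_p})`, the point
`q = D⁻¹q̃` is a formal equilibrium of `(n̲, A₀D)`; consequently `(n̲, A₀D)` is a
conservative polymatrix game. -/
theorem stmt12 {p : ℕ} {n : Fin p → ℕ} (hn : ∀ α, 0 < n α)
    (A₀ : Matrix (Idx p n) (Idx p n) ℝ) (hA₀ : A₀ᵀ = -A₀)
    (qt : Idx p n → ℝ)
    (heq : ∀ (α : Fin p) (i j : Fin (n α)),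
      A₀.mulVec qt ⟨α, i⟩ = A₀.mulVec qt ⟨α, j⟩)
    (lam : Fin p → ℝ) (hlam : ∀ α, lam α = ∑ j : Fin (n α), qt ⟨α, j⟩)
    (hne : ∀ α, lam α ≠ 0) :
    FormalEq (A₀ * Matrix.diagonal (fun i => lam i.1)) (fun i => qt i / lam i.1) ∧
    IsConservative (A₀ * Matrix.diagonal (fun i => lam i.1)) := by
  have hv : (Matrix.diagonal (fun i : Idx p n => lam i.1)).mulVec
      (fun i => qt i / lam i.1) = qt := by
    funext i
    rw [Matrix.mulVec_diagonal]
    field_simp [hne i.1]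
  have key : (A₀ * Matrix.diagonal (fun i : Idx p n => lam i.1)).mulVec
      (fun i => qt i / lam i.1) = A₀.mulVec qt := by
    rw [← Matrix.mulVec_mulVec, hv]
  have hfe : FormalEq (A₀ * Matrix.diagonal (fun i => lam i.1)) (fun i => qt i / lam i.1) := by
    constructor
    · intro α i j; rw [key]; exact heq α i j
    · intro α
      have : ∑ j : Fin (n α), qt ⟨α, j⟩ / lam α = (∑ j : Fin (n α), qt ⟨α, j⟩) / lam α :=
        (Finset.sum_div _ _ _).symm
      rw [this, ← hlam α, div_self (hne α)]
  refine ⟨hfe, ⟨_, hfe⟩, A₀, lam, hA₀, hne, ?_⟩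
  intro α β i i' j
  simp
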